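/- Let g ∼ N(0, I_{d−1}) and ε ∼ N(0,1) be independent, s > 0, n ≥ 1. Define R = (s² + sε/√n) / √(s² + 2sε/√n + (ε² + ‖g‖²)/n). Then as n → ∞, R → s almost surely, and the first-order expansion R = s − (‖g‖²)/(2sn) + O_p(n^{−3/2}) holds, where ‖g‖² ∼ χ²_{d−1}. -/

import Mathlib

open MeasureTheory ProbabilityTheory Filter Topology


lemma core2 (s t q : ℝ) (hs : 0 < s) (ht : s/2 ≤ t) (hq : 0 ≤ q) :
    |s*t/Real.sqrt (t^2+q) - s + q/(2*s)| ≤ (2*q*|t^2-s^2| + 2*q^2)/s^3 := by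
  set D := Real.sqrt (t^2+q) with hDdef
  have ht0 : 0 < t := by linarith
  have hD2 : D^2 = t^2+q := Real.sq_sqrt (by positivity)
  have hDt : t ≤ D := Real.le_sqrt_of_sq_le (by linarith)
  have hD0 : 0 < D := lt_of_lt_of_le ht0 hDt
  have hsne : (s:ℝ) ≠ 0 := ne_of_gt hs
  have hDne : D ≠ 0 := ne_of_gt hD0
  have htD : t + D ≠ 0 := by positivity
  have hident : s*t/D - s + q/(2*s) = q*(t^2 + t*D + q - 2*s^2)/(2*s*D*(t+D)) := by
    field_simp
    ring_nf
    linear_combination (-2*s*D*(t+2*s^2+D-q) + 2*s*D*(t+D) + (-2*s*D*q - 2*s^2 + 4*s^3*D + q)) * hD2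
  rw [hident]
  have hM1 : t*D - t^2 ≤ q := by nlinarith [hD2, hDt, ht0.le]
  have hM2 : 0 ≤ t*D - t^2 := by nlinarith [hDt, ht0.le]
  have hMabs : |t^2 + t*D + q - 2*s^2| ≤ 2*|t^2-s^2| + 2*q := by
    have h1 := le_abs_self (t^2-s^2)
    have h2 := neg_abs_le (t^2-s^2)
    rw [abs_le]; constructor <;> nlinarith
  have hsD : s/2 ≤ D := le_trans ht hDt
  have h1 : s/2*(s/2) ≤ t*D := mul_le_mul ht hsD (by linarith) ht0.le
  have h2 : s/2*(s/2) ≤ D*D := mul_le_mul hsD hsD (by linarith) hD0.le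
  have hden : s^3 ≤ 2*s*D*(t+D) := by nlinarith [h1, h2, hs]
  rw [abs_div, abs_mul, abs_of_pos (show (0:ℝ) < 2*s*D*(t+D) by positivity), abs_of_nonneg hq]
  apply div_le_div₀ (by positivity) ?_ (by positivity) hden
  calc q * |t^2+t*D+q-2*s^2| ≤ q * (2*|t^2-s^2| + 2*q) :=
        mul_le_mul_of_nonneg_left hMabs hq
    _ = 2*q*|t^2-s^2| + 2*q^2 := by ring


lemma core1 (s t q : ℝ) (hs : 0 < s) (hq : 0 ≤ q) :
    |s*t/Real.sqrt (t^2+q) - s + q/(2*s)| ≤ 2*s + q/(2*s) := by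
  set D := Real.sqrt (t^2+q) with hDdef
  have habs : |s*t/D| ≤ s := by
    rcases eq_or_lt_of_le (Real.sqrt_nonneg (t^2+q)) with h | hD0
    · rw [← hDdef] at h; rw [← h, div_zero, abs_zero]; exact hs.le
    · have htD : |t| ≤ D := by
        rw [hDdef, ← Real.sqrt_sq_eq_abs]
        exact Real.sqrt_le_sqrt (by linarith)
      rw [abs_div, abs_mul, abs_of_pos hs, abs_of_pos hD0]
      rw [div_le_iff₀ hD0]
      calc s * |t| ≤ s * D := by nlinarith
        _ = s * D := rfl
  calc |s*t/D - s + q/(2*s)| ≤ |s*t/D| + |(-s + q/(2*s))| := by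
        rw [show s*t/D - s + q/(2*s) = s*t/D + (-s + q/(2*s)) by ring]
        exact abs_add_le _ _
    _ ≤ s + (s + q/(2*s)) := by
        refine add_le_add habs ?_
        rw [abs_le]
        have : 0 ≤ q/(2*s) := by positivity
        constructor <;> nlinarith
    _ = 2*s + q/(2*s) := by ring


set_option maxHeartbeats 1000000 in
lemma det_bound (s ε Q : ℝ) (hs : 0 < s) (hQ : 0 ≤ Q) (n : ℕ) (hn : 1 ≤ n) :
    (n:ℝ) * Real.sqrt n *
      |(s^2 + s*ε/Real.sqrt n)/Real.sqrt (s^2 + 2*s*ε/Real.sqrt n + (ε^2+Q)/n)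
        - (s - Q/(2*s*n))|
    ≤ 2*Q*|ε| * (2*s+|ε|)/s^3 + 2*Q^2/s^3 + 16*ε^4*(2*s + Q/(2*s))/s^4 := by
  have hn1 : (1:ℝ) ≤ (n:ℝ) := by exact_mod_cast hn
  have hn0 : (0:ℝ) < n := by linarith
  have hnne : (n:ℝ) ≠ 0 := ne_of_gt hn0
  set rn := Real.sqrt (n:ℝ) with hrndef
  have hrn1 : 1 ≤ rn := Real.one_le_sqrt.mpr hn1
  have hrn0 : 0 < rn := by linarith
  have hrnne : rn ≠ 0 := ne_of_gt hrn0
  have hrn2 : rn^2 = (n:ℝ) := Real.sq_sqrt hn0.le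
  set t := s + ε/rn with hT
  set q := Q/(n:ℝ) with hQdef
  have hq : 0 ≤ q := by positivity
  have hsne : s ≠ 0 := ne_of_gt hs
  have hrw : (s^2 + s*ε/rn)/Real.sqrt (s^2 + 2*s*ε/rn + (ε^2+Q)/n) - (s - Q/(2*s*n))
      = s*t/Real.sqrt (t^2+q) - s + q/(2*s) := by
    have h_in : s^2 + 2*s*ε/rn + (ε^2+Q)/n = t^2 + q := by
      rw [hT, hQdef]; field_simp
      linear_combination (ε^2*rn*(n:ℝ) - ε^2*rn*(n:ℝ) + ε^2) * hrn2
    have h_num : s^2 + s*ε/rn = s*t := by rw [hT]; ring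
    have h_tail : Q/(2*s*(n:ℝ)) = q/(2*s) := by rw [hQdef]; ring
    rw [h_in, h_num, h_tail]; ring
  rw [hrw]
  clear_value rn t q
  rcases le_or_gt (4*ε^2) ((n:ℝ)*s^2) with hcase | hcase
  · -- t ≥ s/2 regime
    have hε2 : ε^2 ≤ (rn*(s/2))^2 := by rw [mul_pow]; nlinarith [hrn2]
    have hεabs : |ε| ≤ rn*(s/2) := by
      have h0 : 0 ≤ rn*(s/2) := by positivity
      nlinarith [abs_nonneg ε, sq_abs ε]
    have ht : s/2 ≤ t := by
      have h1 : -(s/2) ≤ ε/rn := by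
        rw [le_div_iff₀ hrn0]
        nlinarith [neg_abs_le ε]
      rw [hT]; linarith
    have key := core2 s t q hs ht hq
    have hX : |t^2-s^2| ≤ (|ε|/rn)*(2*s+|ε|) := by
      have h1 : t^2-s^2 = (ε/rn)*(2*s+ε/rn) := by rw [hT]; ring
      rw [h1, abs_mul, abs_div, abs_of_pos hrn0]
      apply mul_le_mul_of_nonneg_left ?_ (by positivity)
      calc |2*s+ε/rn| ≤ |2*s| + |ε/rn| := abs_add_le _ _
        _ = 2*s + |ε|/rn := by rw [abs_of_pos (by linarith : (0:ℝ) < 2*s), abs_div,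
              abs_of_pos hrn0]
        _ ≤ 2*s + |ε| := by
            have := div_le_self (abs_nonneg ε) hrn1
            linarith
    have hrnX : rn * |t^2-s^2| ≤ |ε| * (2*s+|ε|) := by
      calc rn * |t^2-s^2| ≤ rn * ((|ε|/rn)*(2*s+|ε|)) :=
            mul_le_mul_of_nonneg_left hX hrn0.le
        _ = |ε| * (2*s+|ε|) := by field_simp
    have hA : (n:ℝ)*rn*(2*q*|t^2-s^2| / s^3) ≤ 2*Q*|ε| * (2*s+|ε|)/s^3 := by
      have heq : (n:ℝ)*rn*(2*q*|t^2-s^2| / s^3) = 2*Q*(rn*|t^2-s^2|)/s^3 := by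
        rw [hQdef]; field_simp
      rw [heq, show 2*Q*|ε| * (2*s+|ε|)/s^3 = 2*Q*(|ε| * (2*s+|ε|))/s^3 from by ring]
      exact div_le_div_of_nonneg_right (mul_le_mul_of_nonneg_left hrnX (by positivity)) (by positivity)
    have hB : (n:ℝ)*rn*(2*q^2/s^3) ≤ 2*Q^2/s^3 := by
      have heq : (n:ℝ)*rn*(2*q^2/s^3) = 2*Q^2/(rn*s^3) := by
        rw [hQdef]; field_simp
        linear_combination (2*Q^2*s^3*(n:ℝ) + Q^2 - 2*Q^2*s^3*(n:ℝ)) * hrn2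
      rw [heq]
      exact div_le_div_of_nonneg_left (by positivity) (by positivity) (by nlinarith [pow_pos hs 3])
    have hthird : 0 ≤ 16*ε^4*(2*s + Q/(2*s))/s^4 := by positivity
    calc (n:ℝ)*rn*|s*t/Real.sqrt (t^2+q) - s + q/(2*s)|
        ≤ (n:ℝ)*rn*((2*q*|t^2-s^2| + 2*q^2)/s^3) :=
          mul_le_mul_of_nonneg_left key (by positivity)
      _ = (n:ℝ)*rn*(2*q*|t^2-s^2| / s^3) + (n:ℝ)*rn*(2*q^2/s^3) := by ring
      _ ≤ 2*Q*|ε| * (2*s+|ε|)/s^3 + 2*Q^2/s^3 := add_le_add hA hB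
      _ ≤ _ := by linarith
  · -- crude regime
    have crude := core1 s t q hs hq
    have hq2 : q/(2*s) ≤ Q/(2*s) := by
      have : q ≤ Q := by rw [hQdef]; exact div_le_self hQ hn1
      exact div_le_div_of_nonneg_right this (by linarith)
    have hrn_le : rn ≤ (n:ℝ) := by nlinarith [hrn2, hrn1]
    have hnn : (n:ℝ)*rn ≤ 16*ε^4/s^4 := by
      have h1 : (n:ℝ)*rn ≤ (n:ℝ)*(n:ℝ) := mul_le_mul_of_nonneg_left hrn_le hn0.le
      have h2 : (n:ℝ)*(n:ℝ)*s^4 ≤ 16*ε^4 := by nlinarith [mul_le_mul hcase.le hcase.le (by positivity : (0:ℝ) ≤ (n:ℝ)*s^2) (by positivity : (0:ℝ) ≤ 4*ε^2)]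
      rw [le_div_iff₀ (by positivity : (0:ℝ) < s^4)]
      nlinarith [mul_le_mul_of_nonneg_right h1 (pow_nonneg hs.le 4)]
    have hpos : (0:ℝ) ≤ 2*s + Q/(2*s) := by positivity
    calc (n:ℝ)*rn*|s*t/Real.sqrt (t^2+q) - s + q/(2*s)|
        ≤ (n:ℝ)*rn*(2*s + Q/(2*s)) := by
          apply mul_le_mul_of_nonneg_left ?_ (by positivity)
          calc |s*t/Real.sqrt (t^2+q) - s + q/(2*s)| ≤ 2*s + q/(2*s) := crude
            _ ≤ 2*s + Q/(2*s) := by linarith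
      _ ≤ (16*ε^4/s^4)*(2*s + Q/(2*s)) := mul_le_mul_of_nonneg_right hnn hpos
      _ = 16*ε^4*(2*s + Q/(2*s))/s^4 := by ring
      _ ≤ _ := by
          have h1 : 0 ≤ 2*Q*|ε| * (2*s+|ε|)/s^3 := by positivity
          have h2 : 0 ≤ 2*Q^2/s^3 := by positivity
          linarith


lemma sqrt_nat_tendsto : Tendsto (fun n : ℕ => Real.sqrt n) atTop atTop := by
  apply tendsto_atTop_atTop.mpr
  intro b
  refine ⟨⌈b⌉₊^2, fun a ha => ?_⟩
  calc b ≤ (⌈b⌉₊ : ℝ) := Nat.le_ceil b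
    _ = Real.sqrt ((⌈b⌉₊:ℝ)^2) := (Real.sqrt_sq (Nat.cast_nonneg _)).symm
    _ ≤ Real.sqrt a := Real.sqrt_le_sqrt (by exact_mod_cast ha)

lemma tendsto_R (s ε Q : ℝ) (hs : 0 < s) :
    Tendsto (fun n : ℕ =>
      (s^2 + s*ε/Real.sqrt n)/Real.sqrt (s^2 + 2*s*ε/Real.sqrt n + (ε^2+Q)/n))
      atTop (𝓝 s) := by
  have h1 : Tendsto (fun n : ℕ => s*ε/Real.sqrt n) atTop (𝓝 0) :=
    Tendsto.div_atTop tendsto_const_nhds sqrt_nat_tendsto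
  have h2 : Tendsto (fun n : ℕ => 2*s*ε/Real.sqrt n) atTop (𝓝 0) :=
    Tendsto.div_atTop tendsto_const_nhds sqrt_nat_tendsto
  have h3 : Tendsto (fun n : ℕ => (ε^2+Q)/(n:ℝ)) atTop (𝓝 0) :=
    Tendsto.div_atTop tendsto_const_nhds tendsto_natCast_atTop_atTop
  have hnum : Tendsto (fun n : ℕ => s^2 + s*ε/Real.sqrt n) atTop (𝓝 (s^2)) := by
    simpa using tendsto_const_nhds.add h1
  have hin : Tendsto (fun n : ℕ => s^2 + 2*s*ε/Real.sqrt n + (ε^2+Q)/n) atTop (𝓝 (s^2)) := by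
    simpa using (tendsto_const_nhds.add h2).add h3
  have hden : Tendsto (fun n : ℕ =>
      Real.sqrt (s^2 + 2*s*ε/Real.sqrt n + (ε^2+Q)/n)) atTop (𝓝 s) := by
    have := hin.sqrt
    rwa [Real.sqrt_sq hs.le] at this
  have := hnum.div hden (ne_of_gt hs)
  have heq : s^2/s = s := by rw [pow_two]; exact mul_div_assoc s s s ▸ (by rw [div_self (ne_of_gt hs), mul_one])
  rwa [heq] at this

/-- Let `Z ~ N(0, I_d)` with `ε = Z₀` and `g = (Z₁,…,Z_{d-1}) ~ N(0, I_{d-1})`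
independent of `ε`, `s > 0`, and
`R n = (s² + s ε/√n) / √(s² + 2 s ε/√n + (ε² + ‖g‖²)/n)`.
Then `R n → s` almost surely as `n → ∞`, and the first-order expansion
`R n = s - ‖g‖²/(2 s n) + O_p(n^{-3/2})` holds: the rescaled remainder
`n^{3/2} (R n - (s - ‖g‖²/(2 s n)))` is bounded in probability. -/

theorem gaussModel_signal_expansion (d : ℕ) (hd : 0 < d) (s : ℝ) (hs : 0 < s)
    {Ω : Type*} [MeasurableSpace Ω] (μ : Measure Ω) [IsProbabilityMeasure μ]
    (Z : Ω → Fin d → ℝ) (hZmeas : Measurable Z)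
    (hZ : μ.map Z = Measure.pi fun _ : Fin d => gaussianReal 0 1) :
    (∀ᵐ ω ∂μ,
      Tendsto (fun n : ℕ =>
        (s ^ 2 + s * Z ω ⟨0, hd⟩ / Real.sqrt n) /
          Real.sqrt (s ^ 2 + 2 * s * Z ω ⟨0, hd⟩ / Real.sqrt n +
            (Z ω ⟨0, hd⟩ ^ 2 + ∑ j ∈ Finset.univ.erase ⟨0, hd⟩, Z ω j ^ 2) / n))
        atTop (𝓝 s)) ∧
    (∀ δ : ℝ, 0 < δ → ∃ C : ℝ, 0 < C ∧ ∀ n : ℕ, 1 ≤ n →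
      μ {ω | C < |(n : ℝ) ^ ((3 : ℝ) / 2) *
          ((s ^ 2 + s * Z ω ⟨0, hd⟩ / Real.sqrt n) /
              Real.sqrt (s ^ 2 + 2 * s * Z ω ⟨0, hd⟩ / Real.sqrt n +
                (Z ω ⟨0, hd⟩ ^ 2 + ∑ j ∈ Finset.univ.erase ⟨0, hd⟩, Z ω j ^ 2) / n) -
            (s - (∑ j ∈ Finset.univ.erase ⟨0, hd⟩, Z ω j ^ 2) / (2 * s * n)))|}
        ≤ ENNReal.ofReal δ) := by
  set εf : Ω → ℝ := fun ω => Z ω ⟨0, hd⟩ with hεf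
  set Qf : Ω → ℝ := fun ω => ∑ j ∈ Finset.univ.erase ⟨0, hd⟩, Z ω j ^ 2 with hQf
  have hQnn : ∀ ω, 0 ≤ Qf ω := fun ω => Finset.sum_nonneg fun j _ => sq_nonneg _
  constructor
  · exact ae_of_all μ fun ω => tendsto_R s (εf ω) (Qf ω) hs
  · intro δ hδ
    set W : Ω → ℝ := fun ω =>
      2*(Qf ω)*|εf ω| * (2*s+|εf ω|)/s^3 + 2*(Qf ω)^2/s^3
        + 16*(εf ω)^4*(2*s + Qf ω/(2*s))/s^4 with hW
    have hεm : Measurable εf := (measurable_pi_apply _).comp hZmeas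
    have hQm : Measurable Qf :=
      Finset.measurable_sum _ fun j _ => ((measurable_pi_apply j).comp hZmeas).pow_const 2
    have hWm : Measurable W :=
      (((((hQm.const_mul 2).mul hεm.abs).mul (hεm.abs.const_add (2*s))).div_const _).add
        (((hQm.pow_const 2).const_mul 2).div_const _)).add
        ((((hεm.pow_const 4).const_mul 16).mul ((hQm.div_const (2*s)).const_add (2*s))).div_const _)
    have hbound : ∀ (n : ℕ), 1 ≤ n → ∀ ω,
        |(n : ℝ) ^ ((3 : ℝ) / 2) *
          ((s ^ 2 + s * εf ω / Real.sqrt n) /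
              Real.sqrt (s ^ 2 + 2 * s * εf ω / Real.sqrt n + (εf ω ^ 2 + Qf ω) / n) -
            (s - Qf ω / (2 * s * n)))| ≤ W ω := by
      intro n hn ω
      have hn1 : (1:ℝ) ≤ (n:ℝ) := by exact_mod_cast hn
      have hn0 : (0:ℝ) < n := by linarith
      have h32 : (n:ℝ) ^ ((3:ℝ)/2) = (n:ℝ) * Real.sqrt n := by
        rw [show (3:ℝ)/2 = 1 + 1/2 by norm_num, Real.rpow_add hn0, Real.rpow_one,
          Real.sqrt_eq_rpow]
      rw [abs_mul, abs_of_nonneg (by rw [h32]; positivity), h32]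
      exact det_bound s (εf ω) (Qf ω) hs (hQnn ω) n hn
    have hsets : ∀ k : ℕ, MeasurableSet {ω | (k:ℝ) < W ω} :=
      fun k => measurableSet_lt measurable_const hWm
    have hanti : Antitone (fun k : ℕ => {ω | (k:ℝ) < W ω}) := by
      intro i j hij ω hω
      exact lt_of_le_of_lt ((Nat.cast_le (α := ℝ)).mpr hij) hω
    have hempty : (⋂ k : ℕ, {ω | (k:ℝ) < W ω}) = ∅ := by
      ext ω
      simp only [Set.mem_iInter, Set.mem_setOf_eq, Set.mem_empty_iff_false, iff_false, not_forall]
      obtain ⟨k, hk⟩ := exists_nat_gt (W ω)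
      exact ⟨k, not_lt.mpr hk.le⟩
    have htend := tendsto_measure_iInter_atTop
      (fun k => (hsets k).nullMeasurableSet) hanti ⟨0, measure_ne_top μ _⟩
    rw [hempty, measure_empty] at htend
    obtain ⟨k, hk⟩ := (htend.eventually_lt_const
      (show (0:ENNReal) < ENNReal.ofReal δ from ENNReal.ofReal_pos.mpr hδ)).exists
    refine ⟨(k:ℝ)+1, by positivity, fun n hn => ?_⟩
    refine le_trans (measure_mono ?_) hk.le
    intro ω hω
    simp only [Set.mem_setOf_eq] at hω ⊢
    have hb := hbound n hn ω
    simp only [hεf, hQf, hW] at hb ⊢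
    linarith
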